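/- Let T be a finite partial map from indices to a set V, and let i be an index with i ∈ dom(T)↑ (i.e., some element of dom(T) is a prefix of i). Let L = (M \ dom(T)↑) ∪ dom(T) for any set of indices M. Then max(L ∩ i↓) exists and equals max(dom(T) ∩ i↓). -/

import Mathlib

/-- An index: a finite sequence of string-integer pairs with no repeated string. -/
def Index : Type := {l : List (String × ℤ) // (l.map Prod.fst).Nodup}

/-- The prefix order on indices. -/
def Index.pre (i j : Index) : Prop := i.1 <+: j.1

/-- The empty index. -/
def emptyIdx : Index := ⟨[], by simp⟩

/-- Downward closure of a single index. -/
def down (k : Index) : Set Index := {i | Index.pre i k}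

/-- Downward closure of a set of indices. -/
def downSet (L : Set Index) : Set Index := {j | ∃ l ∈ L, Index.pre j l}

/-- Upward closure of a set of indices. -/
def upSet (L : Set Index) : Set Index := {j | ∃ l ∈ L, Index.pre l j}

/-- `m` is the ⊑-greatest element of `S`. -/
def greatestIn (S : Set Index) (m : Index) : Prop := m ∈ S ∧ ∀ s ∈ S, Index.pre s m

/-- Domain of a partial map represented as an `Option`-valued function. -/
def pdom {V : Type*} (f : Index → Option V) : Set Index := {i | f i ≠ none}

open Classical in
/-- `extend(f)(i) = f(max(dom f ∩ i↓))` when the maximum exists; undefined otherwise. -/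
noncomputable def extendFun {V : Type*} (f : Index → Option V) (i : Index) : Option V :=
  if h : ∃ m, greatestIn (pdom f ∩ down i) m then f h.choose else none

open Classical in
/-- The update of `f` by `T`: `T i` on `dom T`, undefined on `(dom T)↑ \ dom T`,
`f i` otherwise. -/
noncomputable def updateMap {V : Type*} (f T : Index → Option V) : Index → Option V :=
  fun i => if i ∈ pdom T then T i else if i ∈ upSet (pdom T) then none else f i

/-- Pointwise sum of two real tensors. -/
def oplus (T T' : Index → Option ℝ) : Index → Option ℝ := fun i =>
  match T i, T' i with
  | some a, some b => some (a + b)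
  | some a, none => some a
  | none, some b => some b
  | none, none => none

/-- A coupling: a partial bijection on indices that agrees on shared strings. -/
def Coupling (R : Index → Index → Prop) : Prop :=
  (∀ i₀ i₁ j, R i₀ j → R i₁ j → i₀ = i₁) ∧
  (∀ i j₀ j₁, R i j₀ → R i j₁ → j₀ = j₁) ∧
  (∀ i₀ i₁, R i₀ i₁ → ∀ (α : String) (v₀ v₁ : ℤ),
    (α, v₀) ∈ i₀.1 → (α, v₁) ∈ i₁.1 → v₀ = v₁)

/-- The relation `P(R)` on sets of indices induced by a coupling `R`. -/
def PRel (R : Index → Index → Prop) (L₀ L₁ : Set Index) : Prop :=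
  ∀ i₀ i₁, R i₀ i₁ →
    ((i₀ ∈ upSet L₀ ↔ i₁ ∈ upSet L₁) ∧
     (i₀ ∈ upSet L₀ → ∃ m₀ m₁, greatestIn (L₀ ∩ down i₀) m₀ ∧
        greatestIn (L₁ ∩ down i₁) m₁ ∧ R m₀ m₁))

/-- The relation `[R ⇀ Δ_V]` / `Tensor_V(R)` on partial maps. -/
def TensorRel {V : Type*} (R : Index → Index → Prop) (T₀ T₁ : Index → Option V) : Prop :=
  ∀ i₀ i₁, R i₀ i₁ →
    ((i₀ ∈ pdom T₀ ↔ i₁ ∈ pdom T₁) ∧ (i₀ ∈ pdom T₀ → T₀ i₀ = T₁ i₁))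

/-- The relation `Tensor†_V(R)` on partial maps (via `extend`). -/
def TensorDagRel {V : Type*} (R : Index → Index → Prop) (T₀ T₁ : Index → Option V) : Prop :=
  ∀ i₀ i₁, R i₀ i₁ →
    ((i₀ ∈ upSet (pdom T₀) ↔ i₁ ∈ upSet (pdom T₁)) ∧
     (i₀ ∈ upSet (pdom T₀) → extendFun T₀ i₀ = extendFun T₁ i₁))

/-- A well-formed state: each variable stores a finite partial map containing `[]`
in its domain. -/
def WFState {Var V : Type*} (σ : Var → Index → Option V) : Prop :=
  ∀ y, (pdom (σ y)).Finite ∧ emptyIdx ∈ pdom (σ y)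

/-- The relation `State(R)` on states. -/
def StateRel {Var V : Type*} (R : Index → Index → Prop)
    (σ₀ σ₁ : Var → Index → Option V) : Prop :=
  ∀ x, TensorDagRel R (σ₀ x) (σ₁ x)

/-- The state update `σ[x : T]`. -/
noncomputable def updState {Var V : Type*} [DecidableEq Var]
    (σ : Var → Index → Option V) (x : Var) (T : Index → Option V) :
    Var → Index → Option V :=
  fun y => if y = x then updateMap (σ y) T else σ y

/-- An antichain of indices: no two distinct elements are ⊑-comparable. -/
def IsAntichainIdx (A : Set Index) : Prop :=
  ∀ i ∈ A, ∀ j ∈ A, Index.pre i j → i = j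

theorem stmt3 {V : Type*} (T : Index → Option V) (hfin : (pdom T).Finite)
    (M : Set Index) (i : Index) (hi : i ∈ upSet (pdom T)) :
    ∃ m, greatestIn (pdom T ∩ down i) m ∧
      greatestIn (((M \ upSet (pdom T)) ∪ pdom T) ∩ down i) m := by
  obtain ⟨l, hl, hli⟩ := hi
  -- the set S = pdom T ∩ down i is finite and nonempty
  have hS : (pdom T ∩ down i).Finite := hfin.inter_of_left _
  have hne : l ∈ pdom T ∩ down i := ⟨hl, hli⟩
  obtain ⟨m, hm, hmax0⟩ := hS.exists_maximalFor (fun s => s.1.length) _ ⟨l, hne⟩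
  have hmax : ∀ s ∈ pdom T ∩ down i, m.1.length ≤ s.1.length → m.1.length = s.1.length :=
    fun s hs h => le_antisymm h (hmax0 hs h)
  have hgr : greatestIn (pdom T ∩ down i) m := by
    refine ⟨hm, fun s hs => ?_⟩
    rcases List.prefix_or_prefix_of_prefix hs.2 hm.2 with h | h
    · exact h
    · have := hmax s hs h.length_le
      have heq : m.1 = s.1 := List.IsPrefix.eq_of_length h this
      show s.1 <+: m.1
      rw [heq]
  refine ⟨m, hgr, ⟨Or.inr hm.1, hm.2⟩, fun s hs => ?_⟩
  rcases hs.1 with h | h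
  · rcases List.prefix_or_prefix_of_prefix hs.2 hm.2 with h2 | h2
    · exact h2
    · exact absurd ⟨m, hm.1, h2⟩ h.2
  · exact hgr.2 s ⟨h, hs.2⟩
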